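/- For every f ∈ U(ℝ) there exists a compactification (G(f), θ) of ℝ with G(f) a separable compact abelian group, and a continuous function h : G(f) → ℂ, such that f = h ∘ θ. Explicitly, for nonzero f one may take θ : ℝ → 𝕋^{Ω(f)} defined by θ(x)(ω) := e^{iωx} and G(f) := closure of θ(ℝ) in the product group 𝕋^{Ω(f)}. -/

import Mathlib

open MeasureTheory Filter

noncomputable section

/-- `g` is a trigonometric polynomial: a finite sum `x ↦ ∑ a_ω e^{iωx}`. -/
def IsTrigPoly (g : ℝ → ℂ) : Prop :=
  ∃ (s : Finset ℝ) (a : ℝ → ℂ), ∀ x : ℝ, g x = ∑ ω ∈ s, a ω * Complex.exp (Complex.I * ω * x)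

/-- Bohr's uniformly almost periodic functions: uniform limits of trigonometric polynomials. -/
def IsUAP (f : ℝ → ℂ) : Prop :=
  Continuous f ∧ ∀ ε : ℝ, 0 < ε → ∃ g : ℝ → ℂ, IsTrigPoly g ∧ ∀ x : ℝ, ‖f x - g x‖ ≤ ε

/-- Every `f ∈ U(ℝ)` factors through a compactification `(G(f), θ)` of `ℝ` with `G(f)` a
separable compact abelian (topological) group: there is a continuous homomorphism
`θ : ℝ → G(f)` with dense image and a continuous `h : G(f) → ℂ` with `f = h ∘ θ`. -/
theorem exists_separable_compactification
    (f : ℝ → ℂ) (hf : IsUAP f) :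
    ∃ (G : Type) (ts : TopologicalSpace G) (gr : CommGroup G),
      @IsTopologicalGroup G ts gr.toGroup ∧
      @CompactSpace G ts ∧
      @TopologicalSpace.SeparableSpace G ts ∧
      ∃ θ : ℝ → G,
        (∀ x y : ℝ, θ (x + y) = θ x * θ y) ∧
        @Continuous ℝ G _ ts θ ∧
        @DenseRange G ts ℝ θ ∧
        ∃ h : G → ℂ, @Continuous G ℂ ts _ h ∧ f = h ∘ θ := by
  obtain ⟨hfc, happ⟩ := hf
  have hg : ∀ n : ℕ, ∃ g : ℝ → ℂ, IsTrigPoly g ∧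
      ∀ x, ‖f x - g x‖ ≤ 1 / (n + 1) := fun n => happ _ (by positivity)
  choose g hgt hgb using hg
  choose s a hsa using hgt
  let I : Type := Σ n : ℕ, {ω // ω ∈ s n}
  let freq : I → ℝ := fun i => i.2.1
  let θ0 : ℝ → (I → Circle) := fun x i => Circle.exp (freq i * x)
  have θ0_add : ∀ x y, θ0 (x + y) = θ0 x * θ0 y := by
    intro x y; funext i
    simp only [θ0, mul_add, Circle.exp_add]; rfl
  have θ0_zero : θ0 0 = 1 := by
    funext i; simp only [θ0, mul_zero, Circle.exp_zero]; rfl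
  have θ0_neg : ∀ x, θ0 (-x) = (θ0 x)⁻¹ := by
    intro x; funext i
    simp only [θ0, mul_neg, Circle.exp_neg]; rfl
  let S : Subgroup (I → Circle) :=
    { carrier := Set.range θ0
      one_mem' := ⟨0, θ0_zero⟩
      mul_mem' := by rintro _ _ ⟨x, rfl⟩ ⟨y, rfl⟩; exact ⟨x + y, θ0_add x y⟩
      inv_mem' := by rintro _ ⟨x, rfl⟩; exact ⟨-x, θ0_neg x⟩ }
  let G := S.topologicalClosure
  haveI : CompactSpace G :=
    isCompact_iff_compactSpace.mp S.isClosed_topologicalClosure.isCompact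
  haveI : SecondCountableTopology G :=
    Topology.IsInducing.subtypeVal.secondCountableTopology
  refine ⟨G, inferInstance, inferInstance, inferInstance, inferInstance, inferInstance, ?_⟩
  · -- the maps
    have hmem : ∀ x : ℝ, θ0 x ∈ G :=
      fun x => S.le_topologicalClosure (Set.mem_range_self x)
    let θ : ℝ → G := fun x => ⟨θ0 x, hmem x⟩
    have hθ0c : Continuous θ0 := by
      refine continuous_pi fun i => ?_
      exact Circle.exp.continuous.comp (continuous_const.mul continuous_id)
    have hθc : Continuous θ := hθ0c.subtype_mk _
    have hθd : DenseRange θ := by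
      intro z
      rw [closure_subtype]
      have : Subtype.val '' Set.range θ = Set.range θ0 := by
        ext w; constructor
        · rintro ⟨zz, ⟨x, rfl⟩, rfl⟩; exact ⟨x, rfl⟩
        · rintro ⟨x, rfl⟩; exact ⟨θ x, ⟨x, rfl⟩, rfl⟩
      rw [this]
      exact z.2
    refine ⟨θ, fun x y => Subtype.ext (θ0_add x y), hθc, hθd, ?_⟩
    -- the trig polys factor through G
    let H : ℕ → C(G, ℂ) := fun n =>
      ⟨fun z => ∑ ω ∈ (s n).attach, a n ω.1 * ((z.1 ⟨n, ω⟩ : Circle) : ℂ), by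
        refine continuous_finset_sum _ fun ω _ => ?_
        exact continuous_const.mul
          ((continuous_subtype_val.comp ((continuous_apply _).comp continuous_subtype_val)))⟩
    have hHθ : ∀ n x, H n (θ x) = g n x := by
      intro n x
      have : (g n) x = ∑ ω ∈ s n, a n ω * Complex.exp (Complex.I * ω * x) := hsa n x
      rw [this]
      show (∑ ω ∈ (s n).attach, a n ω.1 * ((θ0 x ⟨n, ω⟩ : Circle) : ℂ)) = _
      rw [← Finset.sum_attach (s n) (fun ω => a n ω * Complex.exp (Complex.I * ω * x))]
      refine Finset.sum_congr rfl fun ω _ => ?_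
      congr 1
      show ((Circle.exp (ω.1 * x) : Circle) : ℂ) = _
      rw [Circle.coe_exp]
      congr 1
      push_cast
      ring
    -- uniform Cauchy bound
    have key : ∀ n m : ℕ, ∀ z : G, ‖H n z - H m z‖ ≤ 1 / (n + 1) + 1 / (m + 1) := by
      intro n m
      have hC : IsClosed {z : G | ‖H n z - H m z‖ ≤ 1 / (n + 1) + 1 / (m + 1)} :=
        isClosed_le (((H n).continuous.sub (H m).continuous).norm) continuous_const
      have hsub : Set.range θ ⊆ {z : G | ‖H n z - H m z‖ ≤ 1 / (n + 1) + 1 / (m + 1)} := by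
        rintro _ ⟨x, rfl⟩
        simp only [Set.mem_setOf_eq, hHθ]
        have h1 : ‖f x - g n x‖ ≤ 1 / (n + 1) := by
          exact hgb n x
        have h2 : ‖f x - g m x‖ ≤ 1 / (m + 1) := by
          exact hgb m x
        calc ‖g n x - g m x‖ = ‖-(f x - g n x) + (f x - g m x)‖ := by congr 1; ring
          _ ≤ ‖-(f x - g n x)‖ + ‖f x - g m x‖ := norm_add_le _ _
          _ ≤ 1 / (n + 1) + 1 / (m + 1) := by rw [norm_neg]; exact add_le_add h1 h2
      intro z
      exact (hC.closure_subset_iff.mpr hsub) (hθd z)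
    have hcauchy : CauchySeq H := by
      refine cauchySeq_of_le_tendsto_0 (fun N => 2 / ((N : ℝ) + 1)) (fun n m N hn hm => ?_) ?_
      · refine (ContinuousMap.dist_le (by positivity)).mpr fun z => ?_
        rw [dist_eq_norm]
        calc ‖H n z - H m z‖ = ‖H n z - H m z‖ := rfl
          _ ≤ 1 / (n + 1) + 1 / (m + 1) := key n m z
          _ ≤ 1 / (N + 1) + 1 / (N + 1) := add_le_add
              (one_div_le_one_div_of_le (by positivity)
                (by exact_mod_cast Nat.succ_le_succ hn))
              (one_div_le_one_div_of_le (by positivity)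
                (by exact_mod_cast Nat.succ_le_succ hm))
          _ = 2 / ((N : ℝ) + 1) := by ring
      · have h0 : Tendsto (fun N : ℕ => 1 / ((N : ℝ) + 1)) atTop (nhds 0) :=
          tendsto_one_div_add_atTop_nhds_zero_nat
        have := h0.const_mul (2 : ℝ)
        simp only [mul_zero] at this
        convert this using 2 with N
        ring
    obtain ⟨h, hh⟩ := cauchySeq_tendsto_of_complete hcauchy
    refine ⟨fun z => h z, h.continuous, ?_⟩
    funext x
    have h1 : Tendsto (fun n => H n (θ x)) atTop (nhds (h (θ x))) :=
      ((ContinuousEvalConst.continuous_eval_const (θ x)).tendsto h).comp hh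
    simp only [hHθ] at h1
    have h2 : Tendsto (fun n => g n x) atTop (nhds (f x)) := by
      rw [tendsto_iff_dist_tendsto_zero]
      refine squeeze_zero (fun n => dist_nonneg) (fun n => ?_)
        tendsto_one_div_add_atTop_nhds_zero_nat
      rw [dist_eq_norm, norm_sub_rev]
      exact hgb n x
    exact tendsto_nhds_unique h2 h1

end
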